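/- arXiv:2007.08899 — 3 statements merged into one kernel-verified Lean document; each statement's English description precedes it below -/
import Mathlib

section
/- Let f: ℝ → ℝ be an even C¹ function such that f(t) → 0 and (1+t²)·f'(t) → 0 as |t| → ∞. Then f lies in the closure, with respect to the C¹-norm ‖g‖_{C¹} = sup|g| + sup|g'|, of the even part of the subalgebra of C₀(ℝ) generated by f_ev(t)=1/(1+t²) and f_od(t)=t/(1+t²). -/
open Filter Real Set Polynomial

noncomputable section

private def fe : ℝ → ℝ := fun t => 1 / (1 + t ^ 2)
private def fo : ℝ → ℝ := fun t => t / (1 + t ^ 2)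

private lemma one_add_sq_pos (t : ℝ) : (0:ℝ) < 1 + t ^ 2 := by positivity

private lemma fe_pos (t : ℝ) : 0 < fe t := by
  unfold fe; positivity

private lemma fe_le_one (t : ℝ) : fe t ≤ 1 := by
  unfold fe
  rw [div_le_one (one_add_sq_pos t)]
  nlinarith [sq_nonneg t]

private lemma fe_mem_Icc (t : ℝ) : fe t ∈ Icc (0:ℝ) 1 :=
  ⟨(fe_pos t).le, fe_le_one t⟩

private lemma fe_neg (t : ℝ) : fe (-t) = fe t := by simp [fe]

private lemma fo_neg (t : ℝ) : fo (-t) = - fo t := by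
  simp [fo, neg_div]

private lemma continuous_fe : Continuous fe :=
  continuous_const.div (by fun_prop) (fun t => (one_add_sq_pos t).ne')

private lemma continuous_fo : Continuous fo :=
  continuous_id.div (by fun_prop) (fun t => (one_add_sq_pos t).ne')

private lemma hasDerivAt_fe (t : ℝ) :
    HasDerivAt fe (-(2 * t) / (1 + t ^ 2) ^ 2) t := by
  have h : HasDerivAt (fun t : ℝ => 1 + t ^ 2) (2 * t) t := by
    simpa using ((hasDerivAt_pow 2 t).const_add 1)
  have := h.inv (one_add_sq_pos t).ne'
  unfold fe
  simpa [one_div, neg_div, Pi.inv_def] using this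

private lemma tendsto_fe_atBot : Tendsto fe atBot (nhds 0) := by
  have h1 : Tendsto (fun t : ℝ => 1 + t ^ 2) atBot atTop := by
    apply tendsto_atTop_mono (f := fun t : ℝ => -t)
    · intro t; nlinarith [sq_nonneg (t + 1)]
    · exact tendsto_neg_atBot_atTop
  have := h1.inv_tendsto_atTop
  unfold fe
  simpa [one_div, Pi.inv_def] using this

private lemma tendsto_sqrt_atTop' : Tendsto Real.sqrt atTop atTop := by
  apply tendsto_atTop_atTop.2
  intro b
  refine ⟨b ^ 2, fun x hx => ?_⟩
  calc b ≤ |b| := le_abs_self b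
    _ = Real.sqrt (b ^ 2) := (Real.sqrt_sq_eq_abs b).symm
    _ ≤ Real.sqrt x := Real.sqrt_le_sqrt hx

private lemma deriv_odd (f : ℝ → ℝ) (hf : ContDiff ℝ 1 f) (heven : ∀ t, f (-t) = f t) :
    ∀ t, deriv f (-t) = - deriv f t := by
  intro t
  have h1 : HasDerivAt f (deriv f (-t)) (-t) :=
    (hf.differentiable one_ne_zero (-t)).hasDerivAt
  have h2 : HasDerivAt (fun x : ℝ => f (-x)) (deriv f (-t) * (-1)) t :=
    h1.comp t (hasDerivAt_neg t)
  have h3 : (fun x : ℝ => f (-x)) = f := funext heven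
  rw [h3] at h2
  have := h2.deriv
  linarith [this]

/-- Key approximation lemma: `(1+t²) f'(t)` is within `δ` of `fo(t) p(fe(t))`. -/
private lemma approx (f : ℝ → ℝ) (hf : ContDiff ℝ 1 f) (heven : ∀ t, f (-t) = f t)
    (hf'0 : Tendsto (fun t => (1 + t ^ 2) * deriv f t) (cocompact ℝ) (nhds 0))
    (δ : ℝ) (hδ : 0 < δ) :
    ∃ p : ℝ[X], ∀ t, |(1 + t ^ 2) * deriv f t - fo t * p.eval (fe t)| ≤ δ := by
  set φ : ℝ → ℝ := fun t => (1 + t ^ 2) * deriv f t with hφ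
  have hφcont : Continuous φ :=
    (continuous_const.add (continuous_pow 2)).mul (hf.continuous_deriv le_rfl)
  have hd0 : deriv f 0 = 0 := by
    have h := deriv_odd f hf heven 0
    simp only [neg_zero] at h
    linarith
  have hφ0 : φ 0 = 0 := by simp [hφ, hd0]
  have hφodd : ∀ t, φ (-t) = - φ t := by
    intro t
    simp only [hφ, deriv_odd f hf heven t, neg_sq]
    ring
  have hφtop : Tendsto φ atTop (nhds 0) := by
    apply hf'0.mono_left
    rw [cocompact_eq_atBot_atTop]
    exact le_sup_right
  set σ : ℝ → ℝ := fun u => Real.sqrt ((1 - u) / u) with hσ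
  set Φ : ℝ → ℝ := fun u => φ (σ u) with hΦ
  have hΦ0 : Φ 0 = 0 := by simp [hΦ, hσ, hφ0]
  have hσfe : ∀ t, 0 ≤ t → σ (fe t) = t := by
    intro t ht
    have h2 : (1 + t ^ 2) ≠ 0 := (one_add_sq_pos t).ne'
    have h3 : (1 - fe t) / fe t = t ^ 2 := by
      unfold fe; field_simp; ring
    rw [hσ]
    simp only
    rw [h3, Real.sqrt_sq ht]
  have hΦcont : ContinuousOn Φ (Icc 0 1) := by
    intro u hu
    rcases eq_or_lt_of_le hu.1 with h0 | h0
    · -- u = 0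
      rw [ContinuousWithinAt, ← h0, hΦ0]
      have hsub : nhdsWithin (0:ℝ) (Icc 0 1) ≤ nhdsWithin 0 ({0} ∪ Ioi 0) := by
        apply nhdsWithin_mono
        intro x hx
        rcases eq_or_lt_of_le hx.1 with h | h
        · exact Or.inl h.symm
        · exact Or.inr h
      apply Tendsto.mono_left _ hsub
      rw [nhdsWithin_union, nhdsWithin_singleton]
      rw [tendsto_sup]
      constructor
      · simpa [hΦ0] using tendsto_pure_nhds Φ 0
      · -- along Ioi 0
        have h1 : Tendsto (fun u : ℝ => (1 - u) / u) (nhdsWithin 0 (Ioi 0)) atTop := by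
          simp only [div_eq_mul_inv]
          apply Filter.Tendsto.pos_mul_atTop (zero_lt_one)
          · have hc : Continuous (fun u : ℝ => 1 - u) := by fun_prop
            exact (hc.tendsto' 0 1 (by norm_num)).mono_left nhdsWithin_le_nhds
          · exact tendsto_inv_nhdsGT_zero
        have h2 : Tendsto σ (nhdsWithin 0 (Ioi 0)) atTop :=
          tendsto_sqrt_atTop'.comp h1
        exact hφtop.comp h2
    · -- u > 0
      apply ContinuousAt.continuousWithinAt
      apply hφcont.continuousAt.comp
      apply Real.continuous_sqrt.continuousAt.comp
      exact ((continuous_const.sub continuous_id).continuousAt).div continuousAt_id h0.ne'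
  -- Weierstrass, step 1
  obtain ⟨r, hr⟩ := exists_polynomial_near_of_continuousOn 0 1 Φ hΦcont (δ/4) (by positivity)
  set r₂ : ℝ[X] := r - C (r.eval 0) * (1 - X) - C (r.eval 1) * X with hr₂
  have hr₂0 : r₂.eval 0 = 0 := by simp [hr₂]
  have hr₂1 : r₂.eval 1 = 0 := by simp [hr₂]
  obtain ⟨q₁, hq₁⟩ : (X : ℝ[X]) ∣ r₂ := by
    have := (dvd_iff_isRoot (p := r₂) (a := 0)).mpr hr₂0
    simpa using this
  have hq₁1 : q₁.eval 1 = 0 := by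
    have h := hr₂1
    rw [hq₁] at h
    simpa using h
  obtain ⟨Q, hQ⟩ : (X - C 1 : ℝ[X]) ∣ q₁ := (dvd_iff_isRoot).mpr hq₁1
  have hr₂eval : ∀ u : ℝ, r₂.eval u = u * (u - 1) * Q.eval u := by
    intro u
    rw [hq₁, hQ]
    simp only [eval_mul, eval_X, eval_sub, eval_one, eval_C]
    ring
  have hr0small : |r.eval 0| ≤ δ/4 := by
    have := hr 0 ⟨le_rfl, by norm_num⟩
    rw [hΦ0] at this
    simpa using this.le
  have hΦ1 : Φ 1 = 0 := by
    have : σ 1 = 0 := by simp [hσ]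
    simp [hΦ, this, hφ0]
  have hr1small : |r.eval 1| ≤ δ/4 := by
    have := hr 1 ⟨by norm_num, le_rfl⟩
    rw [hΦ1] at this
    simpa using this.le
  have hr₂near : ∀ u ∈ Icc (0:ℝ) 1, |Φ u - r₂.eval u| ≤ δ/2 := by
    intro u hu
    have heq : Φ u - r₂.eval u =
        (Φ u - r.eval u) + (r.eval 0) * (1 - u) + (r.eval 1) * u := by
      simp only [hr₂, eval_sub, eval_mul, eval_C, eval_one, eval_X]
      ring
    rw [heq]
    have e1 : |Φ u - r.eval u| ≤ δ/4 := by
      have := hr u hu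
      rw [abs_sub_comm] at this
      exact this.le
    have e2 : |(r.eval 0) * (1 - u)| ≤ δ/4 * (1 - u) := by
      rw [abs_mul, abs_of_nonneg (show (0:ℝ) ≤ 1 - u by linarith [hu.2])]
      exact mul_le_mul_of_nonneg_right hr0small (by linarith [hu.2])
    have e3 : |(r.eval 1) * u| ≤ δ/4 * u := by
      rw [abs_mul, abs_of_nonneg (show (0:ℝ) ≤ u from hu.1)]
      exact mul_le_mul_of_nonneg_right hr1small hu.1
    calc |(Φ u - r.eval u) + (r.eval 0) * (1 - u) + (r.eval 1) * u|
        ≤ |(Φ u - r.eval u) + (r.eval 0) * (1 - u)| + |(r.eval 1) * u| := abs_add_le _ _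
      _ ≤ |Φ u - r.eval u| + |(r.eval 0) * (1 - u)| + |(r.eval 1) * u| := by
          have := abs_add_le (Φ u - r.eval u) ((r.eval 0) * (1 - u))
          linarith
      _ ≤ δ/4 + δ/4 * (1 - u) + δ/4 * u := by linarith
      _ = δ/2 := by ring
  -- Weierstrass, step 2
  set W : ℝ → ℝ := fun u => Real.sqrt (u * (1 - u)) with hW
  have hWcont : Continuous W := Real.continuous_sqrt.comp
    (continuous_id.mul (continuous_const.sub continuous_id))
  obtain ⟨p, hpnear⟩ := exists_polynomial_near_of_continuousOn 0 1
      (fun u => -(W u * Q.eval u))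
      ((hWcont.mul Q.continuous_aeval).neg.continuousOn) (δ/4) (by positivity)
  refine ⟨p, ?_⟩
  have key : ∀ u ∈ Icc (0:ℝ) 1, |Φ u - W u * p.eval u| ≤ δ := by
    intro u hu
    have hu01 : 0 ≤ u * (1 - u) := by nlinarith [hu.1, hu.2]
    have hW2 : W u ^ 2 = u * (1 - u) := Real.sq_sqrt hu01
    have hWnn : 0 ≤ W u := Real.sqrt_nonneg _
    have hWle1 : W u ≤ 1 := by nlinarith [hW2, hWnn, hu.1, hu.2]
    have e1 : |Φ u - r₂.eval u| ≤ δ/2 := hr₂near u hu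
    have e2 : |r₂.eval u - W u * p.eval u| ≤ δ/4 := by
      have heq : r₂.eval u - W u * p.eval u
          = -(W u) * (p.eval u - -(W u * Q.eval u)) := by
        rw [hr₂eval]
        linear_combination (Q.eval u) * hW2
      rw [heq, abs_mul, abs_neg, abs_of_nonneg hWnn]
      have := (hpnear u hu).le
      calc W u * |p.eval u - -(W u * Q.eval u)| ≤ 1 * (δ/4) := by
            apply mul_le_mul hWle1 this (abs_nonneg _) zero_le_one
        _ = δ/4 := by ring
    calc |Φ u - W u * p.eval u|
        ≤ |Φ u - r₂.eval u| + |r₂.eval u - W u * p.eval u| := abs_sub_le _ _ _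
      _ ≤ δ/2 + δ/4 := by linarith
      _ ≤ δ := by linarith
  have hWfe : ∀ t, 0 ≤ t → W (fe t) = fo t := by
    intro t ht
    have h2 : (1 + t ^ 2) ≠ 0 := (one_add_sq_pos t).ne'
    have h3 : fe t * (1 - fe t) = (fo t) ^ 2 := by
      unfold fe fo
      have e1 : (1:ℝ) - 1/(1+t^2) = t^2/(1+t^2) := by
        rw [eq_div_iff h2, sub_mul, one_mul, div_mul_cancel₀ _ h2]
        ring
      rw [e1, div_mul_div_comm, one_mul, div_pow, ← sq]
    have hfo : 0 ≤ fo t := by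
      unfold fo
      positivity
    rw [hW]
    simp only
    rw [h3, Real.sqrt_sq hfo]
  have main : ∀ t, 0 ≤ t → |φ t - fo t * p.eval (fe t)| ≤ δ := by
    intro t ht
    have h1 : Φ (fe t) = φ t := by rw [hΦ]; simp only; rw [hσfe t ht]
    have h2 := key (fe t) (fe_mem_Icc t)
    rw [h1, hWfe t ht] at h2
    exact h2
  intro t
  rcases le_or_gt 0 t with ht | ht
  · exact main t ht
  · have h := main (-t) (by linarith)
    rw [fe_neg, fo_neg, hφodd] at h
    have : -φ t - -fo t * p.eval (fe t) = -(φ t - fo t * p.eval (fe t)) := by ring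
    rw [this, abs_neg] at h
    exact h

theorem stmt2 (f : ℝ → ℝ)
    (hf : ContDiff ℝ 1 f)
    (heven : ∀ t, f (-t) = f t)
    (hf0 : Tendsto f (cocompact ℝ) (nhds 0))
    (hf'0 : Tendsto (fun t => (1 + t ^ 2) * deriv f t) (cocompact ℝ) (nhds 0)) :
    ∀ ε > (0 : ℝ), ∃ g ∈ NonUnitalAlgebra.adjoin ℝ
        ({fun t => 1 / (1 + t ^ 2), fun t => t / (1 + t ^ 2)} : Set (ℝ → ℝ)),
      (∀ t, g (-t) = g t) ∧
      (⨆ t : ℝ, |f t - g t|) + (⨆ t : ℝ, |deriv f t - deriv g t|) < ε := by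
  intro ε hε
  set δ : ℝ := ε / (2 * (Real.pi + 1)) with hδdef
  have hπ : (0:ℝ) < Real.pi := Real.pi_pos
  have hδ : 0 < δ := by positivity
  obtain ⟨p, hp⟩ := approx f hf heven hf'0 δ hδ
  set N := p.natDegree with hN
  -- the approximating function
  set g : ℝ → ℝ := fun t => ∑ β ∈ Finset.range (N + 1),
      (-(p.coeff β) / (2 * (β + 1))) * fe t ^ (β + 1) with hg
  -- its derivative
  set G : ℝ → ℝ := fun t => ∑ β ∈ Finset.range (N + 1),
      (-(p.coeff β) / (2 * (β + 1))) *
        ((β + 1 : ℕ) * fe t ^ β * (-(2 * t) / (1 + t ^ 2) ^ 2)) with hG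
  have hgderiv : ∀ t, HasDerivAt g (G t) t := by
    intro t
    apply HasDerivAt.fun_sum
    intro β _
    exact ((hasDerivAt_fe t).pow (β + 1)).const_mul _
  have hGeq : ∀ t, G t = fo t * fe t * p.eval (fe t) := by
    intro t
    rw [hG]
    simp only
    rw [Polynomial.eval_eq_sum_range, Finset.mul_sum]
    apply Finset.sum_congr rfl
    intro β _
    have h1 : ((β:ℝ) + 1) ≠ 0 := by positivity
    have h2 : (1 + t ^ 2) ≠ 0 := (one_add_sq_pos t).ne'
    push_cast
    unfold fe fo
    field_simp
  have hderivg : ∀ t, deriv g t = G t := fun t => (hgderiv t).deriv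
  -- pointwise derivative bound
  have hdbound : ∀ t, |deriv f t - G t| ≤ δ * fe t := by
    intro t
    have h2 : fe t * (1 + t ^ 2) = 1 := by
      unfold fe; field_simp
    have heq : deriv f t - G t
        = fe t * ((1 + t ^ 2) * deriv f t - fo t * p.eval (fe t)) := by
      rw [hGeq]
      have h3 : fe t * ((1 + t ^ 2) * deriv f t) = deriv f t := by
        rw [← mul_assoc, h2, one_mul]
      calc deriv f t - fo t * fe t * p.eval (fe t)
          = fe t * ((1 + t ^ 2) * deriv f t) - fe t * (fo t * p.eval (fe t)) := by
            rw [h3]; ring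
        _ = fe t * ((1 + t ^ 2) * deriv f t - fo t * p.eval (fe t)) := by ring
    rw [heq, abs_mul, abs_of_nonneg (fe_pos t).le, mul_comm δ (fe t)]
    exact mul_le_mul_of_nonneg_left (hp t) (fe_pos t).le
  have hd'le : ∀ t, |deriv f t - deriv g t| ≤ δ := by
    intro t
    rw [hderivg t]
    refine (hdbound t).trans ?_
    nlinarith [fe_le_one t, fe_pos t, hδ]
  have hGcont : Continuous G := by
    have hGfun : G = fun t => fo t * fe t * p.eval (fe t) := funext hGeq
    rw [hGfun]
    exact (continuous_fo.mul continuous_fe).mul (p.continuous_aeval.comp continuous_fe)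
  have hdercont : Continuous (fun s => deriv f s - G s) :=
    (hf.continuous_deriv le_rfl).sub hGcont
  have hgbot : Tendsto g atBot (nhds 0) := by
    rw [hg]
    have h1 : Tendsto (fun t : ℝ => ∑ β ∈ Finset.range (N + 1),
        (-(p.coeff β) / (2 * (β + 1))) * fe t ^ (β + 1)) atBot
        (nhds (∑ β ∈ Finset.range (N + 1),
          (-(p.coeff β) / (2 * (β + 1))) * (0:ℝ) ^ (β + 1))) := by
      apply tendsto_finset_sum
      intro β _
      exact (tendsto_fe_atBot.pow (β + 1)).const_mul _
    simpa using h1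
  have hhbot : Tendsto (fun x => f x - g x) atBot (nhds 0) := by
    have hf_bot : Tendsto f atBot (nhds 0) :=
      hf0.mono_left (by rw [cocompact_eq_atBot_atTop]; exact le_sup_left)
    simpa using hf_bot.sub hgbot
  have hat : ∀ y : ℝ, |Real.arctan y| ≤ Real.pi / 2 := fun y =>
    abs_le.2 ⟨(Real.neg_pi_div_two_lt_arctan y).le, (Real.arctan_lt_pi_div_two y).le⟩
  have hsup1 : ∀ t, |f t - g t| ≤ δ * Real.pi := by
    intro t
    have hb : ∀ᶠ x in atBot, |f t - g t| ≤ |f x - g x| + δ * Real.pi := by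
      filter_upwards [eventually_le_atBot t] with x hx
      have hFTC : ∫ s in x..t, (deriv f s - G s) = (f t - g t) - (f x - g x) := by
        apply intervalIntegral.integral_eq_sub_of_hasDerivAt
        · intro y _
          exact (hf.differentiable one_ne_zero y).hasDerivAt.sub (hgderiv y)
        · exact hdercont.intervalIntegrable x t
      have h1 : ‖∫ s in x..t, (deriv f s - G s)‖
          ≤ |∫ s in x..t, δ * (1 / (1 + s ^ 2))| := by
        apply intervalIntegral.norm_integral_le_abs_of_norm_le
        · apply MeasureTheory.ae_of_all
          intro s
          exact hdbound s
        · exact (continuous_const.mul continuous_fe).intervalIntegrable x t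
      have h2 : (∫ s in x..t, δ * (1 / (1 + s ^ 2)))
          = δ * (Real.arctan t - Real.arctan x) := by
        rw [intervalIntegral.integral_const_mul, integral_one_div_one_add_sq]
      have h3 : |∫ s in x..t, δ * (1 / (1 + s ^ 2))| ≤ δ * Real.pi := by
        rw [h2, abs_mul, abs_of_nonneg hδ.le]
        apply mul_le_mul_of_nonneg_left _ hδ.le
        calc |Real.arctan t - Real.arctan x|
            ≤ |Real.arctan t| + |Real.arctan x| := abs_sub _ _
          _ ≤ Real.pi / 2 + Real.pi / 2 := add_le_add (hat t) (hat x)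
          _ = Real.pi := by ring
      have h4 : |(f t - g t) - (f x - g x)| ≤ δ * Real.pi := by
        rw [← hFTC]
        exact h1.trans h3
      calc |f t - g t| = |(f x - g x) + ((f t - g t) - (f x - g x))| := by ring_nf
        _ ≤ |f x - g x| + |(f t - g t) - (f x - g x)| := abs_add_le _ _
        _ ≤ |f x - g x| + δ * Real.pi := by linarith
    have hlim : Tendsto (fun x => |f x - g x| + δ * Real.pi) atBot
        (nhds (0 + δ * Real.pi)) := by
      have := hhbot.abs
      simpa using this.add_const (δ * Real.pi)
    have := ge_of_tendsto hlim hb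
    simpa using this
  -- membership
  have hfe_mem : fe ∈ NonUnitalAlgebra.adjoin ℝ
      ({fun t => 1 / (1 + t ^ 2), fun t => t / (1 + t ^ 2)} : Set (ℝ → ℝ)) := by
    apply NonUnitalAlgebra.subset_adjoin ℝ
    left
    rfl
  have hpow : ∀ n : ℕ, (fun t => fe t ^ (n + 1)) ∈ NonUnitalAlgebra.adjoin ℝ
      ({fun t => 1 / (1 + t ^ 2), fun t => t / (1 + t ^ 2)} : Set (ℝ → ℝ)) := by
    intro n
    induction n with
    | zero => simpa [pow_one] using hfe_mem
    | succ m ih =>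
      have hmm := mul_mem ih hfe_mem
      have heqf : (fun t => fe t ^ (m + 1 + 1))
          = (fun t => fe t ^ (m + 1)) * fe := by
        funext t
        simp [pow_succ, Pi.mul_apply]
      rw [heqf]
      exact hmm
  have hg_mem : g ∈ NonUnitalAlgebra.adjoin ℝ
      ({fun t => 1 / (1 + t ^ 2), fun t => t / (1 + t ^ 2)} : Set (ℝ → ℝ)) := by
    rw [hg]
    have hgsum : (fun t => ∑ β ∈ Finset.range (N + 1),
        (-(p.coeff β) / (2 * (β + 1))) * fe t ^ (β + 1))
        = ∑ β ∈ Finset.range (N + 1),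
            (-(p.coeff β) / (2 * ((β:ℝ) + 1))) • (fun t => fe t ^ (β + 1)) := by
      funext t
      simp [Finset.sum_apply]
    rw [hgsum]
    exact sum_mem fun β _ => SMulMemClass.smul_mem _ (hpow β)
  refine ⟨g, hg_mem, ?_, ?_⟩
  · intro t
    rw [hg]
    simp only [fe_neg]
  · have s1 : (⨆ t : ℝ, |f t - g t|) ≤ δ * Real.pi := ciSup_le hsup1
    have s2 : (⨆ t : ℝ, |deriv f t - deriv g t|) ≤ δ := ciSup_le hd'le
    have hhalf : δ * Real.pi + δ = ε / 2 := by
      rw [hδdef]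
      field_simp
    calc (⨆ t : ℝ, |f t - g t|) + (⨆ t : ℝ, |deriv f t - deriv g t|)
        ≤ δ * Real.pi + δ := add_le_add s1 s2
      _ = ε / 2 := hhalf
      _ < ε := by linarith

end
end

section
/- Let f: ℝ → ℂ be an odd C² function. Define g: ℝ → ℂ by g(t) = (1+t²)·f(t)/t for t ≠ 0 and g(0) = f'(0). Then g is a C¹ function on ℝ (and g is even). Moreover, if f vanishes outside (−ε, ε) for some ε > 0, then so does g. -/
open Topology Filter

theorem stmt3 (f : ℝ → ℂ) (hf : ContDiff ℝ 2 f)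
    (hodd : ∀ t : ℝ, f (-t) = -f t)
    (g : ℝ → ℂ)
    (hg : ∀ t : ℝ, g t = if t = 0 then deriv f 0
      else ((1 + t ^ 2 : ℝ) : ℂ) * f t / (t : ℂ)) :
    ContDiff ℝ 1 g ∧ (∀ t : ℝ, g (-t) = g t) ∧
      ∀ ε > (0 : ℝ), (∀ t : ℝ, ε ≤ |t| → f t = 0) → ∀ t : ℝ, ε ≤ |t| → g t = 0 := by
  classical
  have hfd : Differentiable ℝ f := hf.differentiable (by norm_num)
  have f0 : f 0 = 0 := by
    have := hodd 0; simp only [neg_zero] at this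
    exact add_self_eq_zero.mp (eq_neg_iff_add_eq_zero.mp this)
  have h2' : ContDiff ℝ (1 + 1) f := by norm_num; exact hf
  have hFc : ContDiff ℝ 1 (deriv f) := (contDiff_succ_iff_deriv.mp h2').2.2
  have hFd : Differentiable ℝ (deriv f) := hFc.differentiable one_ne_zero
  have hF'c : Continuous (deriv (deriv f)) := hFc.continuous_deriv le_rfl
  have hFeven : ∀ t, deriv f (-t) = deriv f t := by
    intro t
    have h1 : deriv (fun x => f (-x)) t = -deriv f (-t) := deriv_comp_neg f t
    have h2 : deriv (fun x => f (-x)) t = -deriv f t := by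
      simp only [funext hodd]; exact deriv.neg
    exact neg_injective (h1.symm.trans h2)
  have hF'0 : deriv (deriv f) 0 = 0 := by
    have h1 : deriv (fun x => deriv f (-x)) 0 = -deriv (deriv f) (-0) :=
      deriv_comp_neg (deriv f) 0
    rw [funext hFeven, neg_zero] at h1
    exact add_self_eq_zero.mp (eq_neg_iff_add_eq_zero.mp h1)
  -- first-order estimate for deriv f
  have E1 : ∀ ε > (0:ℝ), ∃ δ > (0:ℝ), ∀ x : ℝ, |x| ≤ δ →
      ‖deriv f x - deriv f 0‖ ≤ ε * |x| := by
    intro ε hε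
    have hT : Filter.Tendsto (deriv (deriv f)) (𝓝 0) (𝓝 0) := by
      have := hF'c.continuousAt (x := 0)
      rwa [ContinuousAt, hF'0] at this
    have hsm : ∀ᶠ x in 𝓝 (0:ℝ), ‖deriv (deriv f) x‖ < ε := by
      have := hT.norm
      simp only [norm_zero] at this
      exact this.eventually_lt_const hε
    obtain ⟨δ, hδ, hb⟩ := Metric.eventually_nhds_iff.mp hsm
    refine ⟨δ/2, by linarith, ?_⟩
    intro x hx
    have hconv : Convex ℝ (Set.Icc (-(δ/2)) (δ/2)) := convex_Icc _ _
    have key := hconv.norm_image_sub_le_of_norm_hasDerivWithin_le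
      (f := deriv f) (f' := deriv (deriv f))
      (fun y _ => (hFd y).hasDerivAt.hasDerivWithinAt)
      (fun y hy => by
        have : dist y 0 < δ := by
          rw [Real.dist_eq, sub_zero]
          have := abs_le.mpr hy; linarith [abs_le.mpr hy]
        exact (hb this).le)
      (x := 0) (y := x)
      (by constructor <;> linarith) (abs_le.mp hx)
    simpa [Real.norm_eq_abs] using key
  -- second-order estimate for f
  have E2 : ∀ ε > (0:ℝ), ∃ δ > (0:ℝ), ∀ t : ℝ, |t| ≤ δ →
      ‖f t - (t:ℂ) * deriv f 0‖ ≤ ε * |t|^2 := by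
    intro ε hε
    obtain ⟨δ, hδ, h1⟩ := E1 ε hε
    refine ⟨δ, hδ, ?_⟩
    intro t ht
    have hconv : Convex ℝ (Set.Icc (-|t|) |t|) := convex_Icc _ _
    have hder : ∀ x : ℝ, HasDerivAt (fun y : ℝ => f y - (y:ℂ) * deriv f 0)
        (deriv f x - deriv f 0) x := by
      intro x
      have hx1 : HasDerivAt (fun y : ℝ => (y:ℂ)) 1 x := by
        exact Complex.ofRealCLM.hasDerivAt (x := x)
      exact ((hfd x).hasDerivAt.sub (hx1.mul_const (deriv f 0))).congr_deriv (by simp)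
    have key := hconv.norm_image_sub_le_of_norm_hasDerivWithin_le
      (f := fun y : ℝ => f y - (y:ℂ) * deriv f 0)
      (f' := fun x => deriv f x - deriv f 0)
      (fun y _ => (hder y).hasDerivWithinAt)
      (fun y hy => le_trans (h1 y (le_trans (abs_le.mpr hy) ht))
        (mul_le_mul_of_nonneg_left (abs_le.mpr hy) hε.le))
      (x := 0) (y := t)
      ⟨neg_nonpos.mpr (abs_nonneg t), abs_nonneg t⟩
      ⟨neg_abs_le t, le_abs_self t⟩
    simp only [f0, Complex.ofReal_zero, zero_mul, sub_zero, sub_zero, Real.norm_eq_abs] at key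
    calc ‖f t - (t:ℂ) * deriv f 0‖ ≤ ε * |t| * |t| := key
      _ = ε * |t|^2 := by ring
  -- the function h
  set h : ℝ → ℂ := fun t => if t = 0 then deriv f 0 else f t / (t:ℂ) with hh
  have hht : ∀ t : ℝ, t ≠ 0 → h t = f t / t := fun t ht => if_neg ht
  have hh0 : h 0 = deriv f 0 := if_pos rfl
  -- derivative at 0
  have hd0 : HasDerivAt h 0 0 := by
    rw [hasDerivAt_iff_isLittleO, Asymptotics.isLittleO_iff]
    intro c hc
    obtain ⟨δ, hδ, h2⟩ := E2 c hc
    filter_upwards [Metric.ball_mem_nhds (0:ℝ) hδ] with t ht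
    simp only [Metric.mem_ball, Real.dist_eq, sub_zero] at ht
    by_cases h0 : t = 0
    · subst h0; simp
    · have ht' : (t:ℂ) ≠ 0 := by exact_mod_cast h0
      have heq : h t - h 0 - (t - 0) • (0:ℂ) = (f t - (t:ℂ) * deriv f 0) / t := by
        rw [hht t h0, hh0]; field_simp; simp
      rw [heq, norm_div]
      have hnt : ‖(t:ℂ)‖ = |t| := by simp [Complex.norm_real]
      rw [hnt]
      rw [div_le_iff₀ (abs_pos.mpr h0)]
      calc ‖f t - (t:ℂ) * deriv f 0‖ ≤ c * |t|^2 := h2 t ht.le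
        _ = c * ‖t - 0‖ * |t| := by rw [sub_zero, Real.norm_eq_abs]; ring
  -- derivative away from 0
  have hdne : ∀ t : ℝ, t ≠ 0 →
      HasDerivAt h ((deriv f t * t - f t) / (t:ℂ)^2) t := by
    intro t ht
    have ht' : (t:ℂ) ≠ 0 := by exact_mod_cast ht
    have hx1 : HasDerivAt (fun y : ℝ => (y:ℂ)) 1 t := by
      exact Complex.ofRealCLM.hasDerivAt (x := t)
    have hdiv := (hfd t).hasDerivAt.div hx1 ht'
    have hev : h =ᶠ[𝓝 t] fun y : ℝ => f y / y := by
      filter_upwards [eventually_ne_nhds ht] with y hy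
      exact hht y hy
    have := hdiv.congr_of_eventuallyEq hev
    simpa using this
  have hdiff : Differentiable ℝ h := by
    intro t
    by_cases ht : t = 0
    · subst ht; exact hd0.differentiableAt
    · exact (hdne t ht).differentiableAt
  have hderiv0 : deriv h 0 = 0 := hd0.deriv
  have hderivne : ∀ t : ℝ, t ≠ 0 → deriv h t = (deriv f t * t - f t) / (t:ℂ)^2 :=
    fun t ht => (hdne t ht).deriv
  -- continuity of the derivative
  have hcd : Continuous (deriv h) := by
    rw [continuous_iff_continuousAt]
    intro t
    by_cases ht : t = 0
    · subst ht
      rw [ContinuousAt, hderiv0, NormedAddCommGroup.tendsto_nhds_zero]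
      intro ε hε
      obtain ⟨δ₁, hδ₁, hE1⟩ := E1 (ε/4) (by linarith)
      obtain ⟨δ₂, hδ₂, hE2⟩ := E2 (ε/4) (by linarith)
      filter_upwards [Metric.ball_mem_nhds (0:ℝ) (lt_min hδ₁ hδ₂)] with t htb
      simp only [Metric.mem_ball, Real.dist_eq, sub_zero] at htb
      by_cases h0 : t = 0
      · subst h0; rw [hderiv0]; simpa using hε
      · rw [hderivne t h0]
        have htabs : (0:ℝ) < |t| := abs_pos.mpr h0
        have e1 := hE1 t (le_of_lt (lt_of_lt_of_le htb (min_le_left _ _)))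
        have e2 := hE2 t (le_of_lt (lt_of_lt_of_le htb (min_le_right _ _)))
        have hsplit : deriv f t * (t:ℂ) - f t =
            (deriv f t - deriv f 0) * t - (f t - (t:ℂ) * deriv f 0) := by ring
        rw [hsplit, norm_div]
        have hnt2 : ‖((t:ℂ))^2‖ = |t|^2 := by
          rw [norm_pow]; simp [Complex.norm_real]
        rw [hnt2, div_lt_iff₀ (by positivity)]
        have hnum : ‖(deriv f t - deriv f 0) * (t:ℂ) - (f t - (t:ℂ) * deriv f 0)‖ ≤
            ε/2 * |t|^2 := by
          calc ‖(deriv f t - deriv f 0) * (t:ℂ) - (f t - (t:ℂ) * deriv f 0)‖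
              ≤ ‖(deriv f t - deriv f 0) * (t:ℂ)‖ + ‖f t - (t:ℂ) * deriv f 0‖ :=
                norm_sub_le _ _
            _ = ‖deriv f t - deriv f 0‖ * |t| + ‖f t - (t:ℂ) * deriv f 0‖ := by
                rw [norm_mul]; simp [Complex.norm_real]
            _ ≤ ε/4 * |t| * |t| + ε/4 * |t|^2 :=
                add_le_add (mul_le_mul_of_nonneg_right e1 (abs_nonneg t)) e2
            _ = ε/2 * |t|^2 := by ring
        nlinarith [pow_pos htabs 2]
    · have hev : deriv h =ᶠ[𝓝 t] fun y : ℝ => (deriv f y * y - f y) / (y:ℂ)^2 := by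
        filter_upwards [eventually_ne_nhds ht] with y hy
        exact hderivne y hy
      have hc : ContinuousAt (fun y : ℝ => (deriv f y * y - f y) / (y:ℂ)^2) t := by
        apply ContinuousAt.div
        · exact ((hFc.continuous.continuousAt).mul
            Complex.continuous_ofReal.continuousAt).sub (hfd.continuous.continuousAt)
        · exact Complex.continuous_ofReal.continuousAt.pow 2
        · exact pow_ne_zero 2 (by exact_mod_cast ht)
      exact hc.congr hev.symm
  have hC1 : ContDiff ℝ 1 h := contDiff_one_iff_deriv.mpr ⟨hdiff, hcd⟩
  -- g in terms of h
  have hgeq : g = fun t : ℝ => ((1 + t^2 : ℝ) : ℂ) * h t := by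
    funext t
    rw [hg t]
    by_cases h0 : t = 0
    · subst h0; rw [if_pos rfl, hh0]; norm_num
    · rw [if_neg h0, hht t h0, mul_div_assoc]
  refine ⟨?_, ?_, ?_⟩
  · rw [hgeq]
    have hpoly : ContDiff ℝ 1 (fun t : ℝ => ((1 + t^2 : ℝ) : ℂ)) :=
      Complex.ofRealCLM.contDiff.comp (contDiff_const.add (contDiff_id.pow 2))
    exact hpoly.mul hC1
  · intro t
    rw [hg t, hg (-t)]
    by_cases h0 : t = 0
    · subst h0; simp
    · rw [if_neg (neg_ne_zero.mpr h0), if_neg h0, hodd t]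
      have ht' : (t:ℂ) ≠ 0 := by exact_mod_cast h0
      push_cast
      field_simp
  · intro ε hε hsupp t hεt
    have ht : t ≠ 0 := by
      intro h0; rw [h0] at hεt; simp at hεt; linarith
    rw [hg t, if_neg ht, hsupp t hεt, mul_zero, zero_div]
end

section
/- Let f: ℝ → ℂ be a C¹ function. Then there exist continuous functions f₀, f₁: [0,∞) → ℂ such that f(t) = f₀(t²) + t·f₁(t²) for all t ∈ ℝ. Moreover, if f vanishes outside (−ε, ε) for some ε > 0, then f₀ and f₁ vanish on [ε², ∞). -/
theorem stmt19 (f : ℝ → ℂ) (hf : ContDiff ℝ 1 f) :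
    ∃ f₀ f₁ : ℝ → ℂ,
      ContinuousOn f₀ (Set.Ici 0) ∧ ContinuousOn f₁ (Set.Ici 0) ∧
      (∀ t : ℝ, f t = f₀ (t ^ 2) + (t : ℂ) * f₁ (t ^ 2)) ∧
      ∀ ε > (0 : ℝ), (∀ t : ℝ, ε ≤ |t| → f t = 0) →
        ∀ s : ℝ, ε ^ 2 ≤ s → f₀ s = 0 ∧ f₁ s = 0 := by
  have hfc : Continuous f := hf.continuous
  have hd : Differentiable ℝ f := hf.differentiable one_ne_zero
  have hdc : Continuous (deriv f) := hf.continuous_deriv le_rfl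
  set f₀ : ℝ → ℂ := fun s => (f (Real.sqrt s) + f (-Real.sqrt s)) / 2 with hf₀def
  set f₁ : ℝ → ℂ := fun s => (1 / 2 : ℂ) * ∫ v in (-1:ℝ)..1, deriv f (Real.sqrt s * v)
    with hf₁def
  have hcont0 : Continuous f₀ := by
    apply Continuous.div_const
    exact (hfc.comp Real.continuous_sqrt).add (hfc.comp Real.continuous_sqrt.neg)
  have hcont1 : Continuous f₁ := by
    apply continuous_const.mul
    apply intervalIntegral.continuous_parametric_intervalIntegral_of_continuous'
      (f := fun s v => deriv f (Real.sqrt s * v))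
    exact hdc.comp ((Real.continuous_sqrt.comp continuous_fst).mul continuous_snd)
  -- key identity
  have key : ∀ t : ℝ, f t = f₀ (t ^ 2) + (t : ℂ) * f₁ (t ^ 2) := by
    have even_int : ∀ t : ℝ, (∫ v in (-1:ℝ)..1, deriv f (-t * v))
        = ∫ v in (-1:ℝ)..1, deriv f (t * v) := by
      intro t
      have := intervalIntegral.integral_comp_neg (a := (-1:ℝ)) (b := 1)
        (fun v => deriv f (t * v))
      simp only [neg_neg] at this
      rw [← this]
      congr 1
      ext v
      ring_nf
    have main : ∀ t : ℝ, 0 < t → f t = f₀ (t ^ 2) + (t : ℂ) * f₁ (t ^ 2) := by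
      intro t ht
      have hsq : Real.sqrt (t ^ 2) = t := by
        rw [Real.sqrt_sq ht.le]
      have hsub : (∫ v in (-1:ℝ)..1, deriv f (t * v))
          = (t : ℂ)⁻¹ * ∫ u in (-t:ℝ)..t, deriv f u := by
        have := intervalIntegral.integral_comp_mul_left (a := (-1:ℝ)) (b := 1)
          (fun u => deriv f u) (c := t) ht.ne'
        rw [this]
        simp [Complex.real_smul, mul_comm]
      have hFTC : (∫ u in (-t:ℝ)..t, deriv f u) = f t - f (-t) := by
        apply intervalIntegral.integral_deriv_eq_sub (fun x _ => hd x)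
        exact hdc.intervalIntegrable _ _
      simp only [hf₀def, hf₁def, hsq, hsub, hFTC]
      have htne : (t : ℂ) ≠ 0 := by exact_mod_cast ht.ne'
      field_simp
      ring
    intro t
    rcases lt_trichotomy t 0 with h | h | h
    · have := main (-t) (by linarith)
      have hsq : (-t) ^ 2 = t ^ 2 := by ring
      rw [hsq] at this
      have heq : f₁ (t ^ 2) = (1 / 2 : ℂ) * ∫ v in (-1:ℝ)..1, deriv f (-t * v) := by
        simp only [hf₁def]
        congr 1
        have hsq2 : Real.sqrt (t ^ 2) = -t := by
          rw [← neg_neg (t^2), neg_neg, ← hsq, Real.sqrt_sq (by linarith)]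
        rw [hsq2]
      rw [even_int] at heq
      -- this : f (-t) = f₀ (t^2) + (-t) * f₁' where f₁'(t²) uses sqrt = -t
      -- We need f t = f₀ (t^2) + t * f₁ (t^2).
      -- derive directly instead
      have hsq2 : Real.sqrt (t ^ 2) = -t := by
        rw [← hsq, Real.sqrt_sq (by linarith)]
      have hsub : (∫ v in (-1:ℝ)..1, deriv f (-t * v))
          = (-t : ℂ)⁻¹ * ∫ u in (t:ℝ)..(-t), deriv f u := by
        have := intervalIntegral.integral_comp_mul_left (a := (-1:ℝ)) (b := 1)
          (fun u => deriv f u) (c := -t) (by linarith)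
        rw [this]
        simp only [neg_mul, one_mul, mul_neg, neg_neg, mul_one, Complex.real_smul]
        push_cast
        ring_nf
      have hFTC : (∫ u in (t:ℝ)..(-t), deriv f u) = f (-t) - f t := by
        apply intervalIntegral.integral_deriv_eq_sub (fun x _ => hd x)
        exact hdc.intervalIntegrable _ _
      simp only [hf₀def, hf₁def, hsq2, hsub, hFTC]
      have htne : (t : ℂ) ≠ 0 := by exact_mod_cast h.ne
      field_simp
      ring
    · subst h
      simp [hf₀def]
    · exact main t h
  refine ⟨f₀, f₁, hcont0.continuousOn, hcont1.continuousOn, key, ?_⟩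
  intro ε hε hvan s hs
  have hεs : ε ≤ Real.sqrt s := by
    rw [Real.le_sqrt hε.le ((sq_nonneg ε).trans hs)]
    exact hs
  have hspos : 0 < Real.sqrt s := lt_of_lt_of_le hε hεs
  have hss : Real.sqrt s ^ 2 = s := Real.sq_sqrt ((sq_nonneg ε).trans hs)
  have hz1 : f (Real.sqrt s) = 0 := hvan _ (by rwa [abs_of_nonneg hspos.le])
  have hz2 : f (-Real.sqrt s) = 0 := hvan _ (by rwa [abs_neg, abs_of_nonneg hspos.le])
  have h0 : f₀ s = 0 := by simp [hf₀def, hz1, hz2]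
  refine ⟨h0, ?_⟩
  have := key (Real.sqrt s)
  rw [hss, hz1, h0, zero_add] at this
  have htne : ((Real.sqrt s : ℝ) : ℂ) ≠ 0 := by exact_mod_cast hspos.ne'
  exact (mul_eq_zero.mp this.symm).resolve_left htne
end
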